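/- Let G be a finite connected simple graph and let P : r = p_0 — p_1 — … — p_t be a simple path in G. Let C_1, …, C_f be the connected components of the induced subgraph of G on the vertices outside P. For each i, let {x_i, y_i} be an edge of G with y_i ∈ C_i and x_i = p_{j_i} on P, where j_i is maximal among all indices j such that p_j has a neighbor in C_i; and let (T_i, y_i) be a DFS tree of G[C_i] rooted at y_i. Then the spanning subgraph T of G consisting of the edges of P, the edges {x_i, y_i} for all i, and the edges of all the T_i is a spanning tree of G, and (T, r) is a DFS tree of G. -/

import Mathlib

open SimpleGraph Walk

section Aux

variable {V : Type*} {G : SimpleGraph V}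

namespace SimpleGraph.Walk

/-- Take the first `i` edges of a walk. -/
def pref {u v : V} : (w : G.Walk u v) → (i : ℕ) → G.Walk u (w.getVert i)
  | .nil, _ => .nil
  | .cons _ _, 0 => .nil
  | .cons h q, (i + 1) => Walk.cons h (pref q i)

lemma length_pref {u v : V} : (w : G.Walk u v) → (i : ℕ) →
    (w.pref i).length = min i w.length
  | .nil, _ => by simp [pref]
  | .cons _ _, 0 => by simp [pref]; rfl
  | .cons h q, (i + 1) => by
      simp [pref, length_pref q i, Nat.succ_min_succ]

lemma getVert_pref {u v : V} : (w : G.Walk u v) → (n i : ℕ) → (h : i ≤ n) →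
    (w.pref n).getVert i = w.getVert i
  | .nil, _, _, _ => by simp [pref]
  | .cons _ _, 0, i, h => by
      interval_cases i; simp [pref]; rfl
  | .cons hadj q, (n + 1), 0, h => by simp [pref]
  | .cons hadj q, (n + 1), (i + 1), h => by
      simp only [pref, getVert_cons_succ]
      exact getVert_pref q n i (by omega)

lemma pref_append_drop {u v : V} : (w : G.Walk u v) → (i : ℕ) →
    (w.pref i).append (w.drop i) = w
  | .nil, i => by cases i <;> rfl
  | .cons h q, 0 => rfl
  | .cons h q, (i + 1) => by
      show Walk.cons h ((q.pref i).append (q.drop i)) = _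
      rw [pref_append_drop q i]

lemma support_pref_subset {u v : V} : (w : G.Walk u v) → (i : ℕ) →
    (w.pref i).support ⊆ w.support
  | .nil, _ => by simp [pref]
  | .cons _ _, 0 => by simp [pref]; exact List.cons_subset.mpr ⟨List.mem_cons_self, List.nil_subset _⟩
  | .cons h q, (i + 1) => by
      simp only [pref, support_cons]
      intro x hx
      rcases List.mem_cons.mp hx with hx | hx
      · exact hx ▸ List.mem_cons_self
      · exact List.mem_cons_of_mem _ (support_pref_subset q i hx)

lemma edges_pref_subset {u v : V} : (w : G.Walk u v) → (i : ℕ) →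
    (w.pref i).edges ⊆ w.edges
  | .nil, _ => by simp [pref]
  | .cons _ _, 0 => by simp [pref]; exact List.nil_subset _
  | .cons h q, (i + 1) => by
      simp only [pref, edges_cons]
      intro x hx
      rcases List.mem_cons.mp hx with hx | hx
      · exact hx ▸ List.mem_cons_self
      · exact List.mem_cons_of_mem _ (edges_pref_subset q i hx)

protected lemma IsPath.pref {u v : V} {w : G.Walk u v} (hw : w.IsPath) (i : ℕ) :
    (w.pref i).IsPath := by
  induction w generalizing i with
  | nil => cases i <;> exact hw
  | cons hadj q ih =>
    cases i with
    | zero => exact IsPath.nil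
    | succ i =>
      rw [cons_isPath_iff] at hw
      exact (ih hw.1 i).cons (fun hx => hw.2 (support_pref_subset q i hx))

lemma length_drop {u v : V} (w : G.Walk u v) (i : ℕ) :
    (w.drop i).length = w.length - min i w.length := by
  have := congrArg Walk.length (w.pref_append_drop i)
  rw [length_append, length_pref] at this
  omega

lemma support_drop_subset {u v : V} (w : G.Walk u v) (i : ℕ) :
    (w.drop i).support ⊆ w.support := by
  intro x hx
  have h2 : x ∈ ((w.pref i).append (w.drop i)).support :=
    (mem_support_append_iff _ _).mpr (Or.inr hx)
  rwa [w.pref_append_drop i] at h2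

lemma edges_drop_subset {u v : V} (w : G.Walk u v) (i : ℕ) :
    (w.drop i).edges ⊆ w.edges := by
  intro x hx
  have h2 : x ∈ ((w.pref i).append (w.drop i)).edges := by
    rw [edges_append]; exact List.mem_append_right _ hx
  rwa [w.pref_append_drop i] at h2

lemma IsPath.getVert_inj {u v : V} {w : G.Walk u v} (hw : w.IsPath) {a b : ℕ}
    (ha : a ≤ w.length) (hb : b ≤ w.length) (h : w.getVert a = w.getVert b) : a = b := by
  induction w generalizing a b with
  | nil => simp at ha hb; omega
  | cons hadj q ih =>
    rw [cons_isPath_iff] at hw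
    match a, b with
    | 0, 0 => rfl
    | 0, (b + 1) =>
      exfalso
      apply hw.2
      rw [mem_support_iff_exists_getVert]
      exact ⟨b, by simpa using h.symm, by simpa using hb⟩
    | (a + 1), 0 =>
      exfalso
      apply hw.2
      rw [mem_support_iff_exists_getVert]
      exact ⟨a, by simpa using h, by simpa using ha⟩
    | (a + 1), (b + 1) =>
      have := ih hw.1 (by simpa using ha) (by simpa using hb) (by simpa using h)
      omega

lemma exists_getVert_of_mem_edges {u v : V} {w : G.Walk u v} {e : Sym2 V} (he : e ∈ w.edges) :
    ∃ k, k < w.length ∧ e = s(w.getVert k, w.getVert (k + 1)) := by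
  induction w with
  | nil => simp at he
  | cons hadj q ih =>
    rw [edges_cons] at he
    rcases List.mem_cons.mp he with he | he
    · exact ⟨0, by simp, by simpa using he⟩
    · obtain ⟨k, hk, hke⟩ := ih he
      exact ⟨k + 1, by simp; omega, by simpa using hke⟩

lemma isPath_append' {u v w : V} {p : G.Walk u v} {q : G.Walk v w}
    (hp : p.IsPath) (hq : q.IsPath) (h : ∀ x, x ∈ p.support → x ∈ q.support → x = v) :
    (p.append q).IsPath := by
  rw [isPath_def, support_append]
  apply List.Nodup.append hp.support_nodup (hq.support_nodup.tail)
  intro x hx hx'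
  have hxv : x = v := h x hx (List.mem_of_mem_tail hx')
  subst hxv
  have := hq.support_nodup
  rw [q.support_eq_cons] at this
  exact (List.nodup_cons.mp this).1 hx'

end SimpleGraph.Walk

end Aux


open SimpleGraph Walk

section Aux2

variable {V : Type*} {T : SimpleGraph V}

lemma exists_path_length_dist {a b : V} (h : T.Reachable a b) :
    ∃ w : T.Walk a b, w.IsPath ∧ w.length = T.dist a b := by
  classical
  obtain ⟨w, hw⟩ := h.exists_walk_length_eq_dist
  exact ⟨w.bypass, w.bypass_isPath,
    le_antisymm (le_trans (Walk.length_bypass_le w) hw.le) (SimpleGraph.dist_le _)⟩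

lemma tree_length_eq_dist (hT : T.IsTree) {a b : V} {w : T.Walk a b} (hw : w.IsPath) :
    w.length = T.dist a b := by
  obtain ⟨w', hw', hl'⟩ := exists_path_length_dist (((isTree_iff _).mp hT).1 a b)
  have h2 : (⟨w, hw⟩ : T.Path a b) = ⟨w', hw'⟩ :=
    ((isTree_iff _).mp hT).2.path_unique _ _
  rw [← hl']
  exact congrArg (fun q : T.Path a b => (q : T.Walk a b).length) h2

lemma tree_dist_adj (hT : T.IsTree) (root : V) {a b : V} (hab : T.Adj a b) :
    T.dist root b = T.dist root a + 1 ∨ T.dist root a = T.dist root b + 1 := by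
  classical
  obtain ⟨w, hw, hl⟩ := exists_path_length_dist (((isTree_iff _).mp hT).1 root b)
  by_cases ha : a ∈ w.support
  · left
    obtain ⟨q, rr, hqr⟩ := Walk.mem_support_iff_exists_append.mp ha
    subst hqr
    have hq : q.IsPath := hw.of_append_left
    have hrr : rr.IsPath := hw.of_append_right
    have huniq : (⟨rr, hrr⟩ : T.Path a b) = SimpleGraph.Path.singleton hab :=
      ((isTree_iff _).mp hT).2.path_unique _ _
    have hrl : rr.length = 1 := by
      have := congrArg (fun q : T.Path a b => (q : T.Walk a b).length) huniq
      simpa [SimpleGraph.Path.singleton] using this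
    have hql : q.length = T.dist root a := tree_length_eq_dist hT hq
    rw [← hl, Walk.length_append, hrl, hql]
  · right
    have hW : (w.concat hab.symm).IsPath := by
      rw [Walk.concat_eq_append]
      refine Walk.isPath_append' hw (SimpleGraph.Path.singleton hab.symm).2 ?_
      intro x hx hx'
      simp only [SimpleGraph.Path.singleton, Walk.support_cons, Walk.support_nil,
        List.mem_cons, List.mem_singleton, List.not_mem_nil, or_false] at hx'
      rcases hx' with rfl | rfl
      · rfl
      · exact absurd hx ha
    have h3 := tree_length_eq_dist hT hW
    rw [Walk.length_concat, hl] at h3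
    exact h3.symm

lemma tree_parent_unique (hT : T.IsTree) (root : V) {v a b : V}
    (h1 : T.Adj v a) (h2 : T.Adj v b)
    (d1 : T.dist root a < T.dist root v) (d2 : T.dist root b < T.dist root v) : a = b := by
  classical
  have key : ∀ {c : V}, T.Adj v c → T.dist root c < T.dist root v →
      ∃ (w : T.Walk root v) (hw : w.IsPath), w.reverse.getVert 1 = c := by
    intro c hc hd
    obtain ⟨w, hw, hl⟩ := exists_path_length_dist (((isTree_iff _).mp hT).1 root c)
    have hv : v ∉ w.support := by
      intro hv
      obtain ⟨q, rr, hqr⟩ := Walk.mem_support_iff_exists_append.mp hv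
      have hq : q.IsPath := by rw [hqr] at hw; exact hw.of_append_left
      have : T.dist root v ≤ q.length := SimpleGraph.dist_le _
      have hlen : q.length ≤ w.length := by
        rw [hqr, Walk.length_append]; omega
      omega
    have hW : (w.concat hc.symm).IsPath := by
      rw [Walk.concat_eq_append]
      refine Walk.isPath_append' hw (SimpleGraph.Path.singleton hc.symm).2 ?_
      intro x hx hx'
      simp only [SimpleGraph.Path.singleton, Walk.support_cons, Walk.support_nil,
        List.mem_cons, List.mem_singleton, List.not_mem_nil, or_false] at hx'
      rcases hx' with rfl | rfl
      · rfl
      · exact absurd hx hv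
    refine ⟨w.concat hc.symm, hW, ?_⟩
    rw [Walk.reverse_concat]
    exact (Walk.getVert_cons_succ _ _).trans (Walk.getVert_zero _)
  obtain ⟨wa, hwa, hga⟩ := key h1 d1
  obtain ⟨wb, hwb, hgb⟩ := key h2 d2
  have : (⟨wa, hwa⟩ : T.Path root v) = ⟨wb, hwb⟩ :=
    ((isTree_iff _).mp hT).2.path_unique _ _
  have hwab : wa = wb := congrArg Subtype.val this
  rw [← hga, ← hgb, hwab]

lemma acyclic_of_rank (t : V → ℕ)
    (h1 : ∀ a b : V, T.Adj a b → t a ≠ t b)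
    (h2 : ∀ v a b : V, T.Adj v a → T.Adj v b → t a < t v → t b < t v → a = b) :
    T.IsAcyclic := by
  classical
  intro x c hc
  obtain ⟨m, hm, hmax⟩ := Finset.exists_max_image c.support.toFinset t
    ⟨x, by simp [Walk.start_mem_support]⟩
  have hm' : m ∈ c.support := by simpa using hm
  have hmax' : ∀ z ∈ c.support, t z ≤ t m := fun z hz => hmax z (by simpa using hz)
  set c' := c.rotate m hm' with hc'def
  have hc' : c'.IsCycle := hc.rotate hm'
  have hsupp : ∀ z ∈ c'.support, z ∈ c.support := by
    intro z hz
    rw [c'.support_eq_cons] at hz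
    rcases List.mem_cons.mp hz with rfl | hz
    · exact hm'
    · have hperm := Walk.support_rotate c m hm'
      have : z ∈ c.support.tail := hperm.mem_iff.mp hz
      exact List.mem_of_mem_tail this
  obtain ⟨u, hu, q, hq⟩ := Walk.not_nil_iff.mp hc'.not_nil
  have hcons : (Walk.cons hu q).IsCycle := hq ▸ hc'
  have hqp : q.IsPath := (Walk.cons_isCycle_iff _ _).mp hcons |>.1
  have hlen : 2 ≤ q.length := by
    have h3 := hc'.three_le_length
    rw [hq] at h3
    simpa using h3
  set b := q.getVert (q.length - 1) with hbdef
  have hbm : T.Adj b m := by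
    have := q.adj_getVert_succ (i := q.length - 1) (by omega)
    rwa [show q.length - 1 + 1 = q.length by omega, q.getVert_length] at this
  have hub : u ≠ b := by
    intro h
    have h0 : q.getVert 0 = q.getVert (q.length - 1) := by
      rw [q.getVert_zero, hbdef] at *
      exact h
    have := hqp.getVert_inj (a := 0) (b := q.length - 1) (by omega) (by omega) h0
    omega
  have humem : u ∈ c.support := by
    apply hsupp
    rw [hq, Walk.support_cons]
    exact List.mem_cons_of_mem _ (Walk.start_mem_support q)
  have hbmem : b ∈ c.support := by
    apply hsupp
    rw [hq, Walk.support_cons]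
    apply List.mem_cons_of_mem
    rw [Walk.mem_support_iff_exists_getVert]
    exact ⟨q.length - 1, rfl, by omega⟩
  have hum : t u < t m := lt_of_le_of_ne (hmax' u humem) (fun h => h1 m u hu h.symm)
  have hbm' : t b < t m := lt_of_le_of_ne (hmax' b hbmem) (fun h => h1 m b hbm.symm h.symm)
  exact hub (h2 m u b hu hbm.symm hum hbm')

end Aux2



/-- `u` lies on the unique path in `T` from `r` to `v`
(characterized in a tree via distances). -/
def IsAncestor {V : Type*} (T : SimpleGraph V) (r u v : V) : Prop :=
  T.dist r u + T.dist u v = T.dist r v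

/-- `u` and `v` are comparable in the rooted tree `(T, r)`. -/
def TreeComparable {V : Type*} (T : SimpleGraph V) (r u v : V) : Prop :=
  IsAncestor T r u v ∨ IsAncestor T r v u

/-- `(T, r)` is a DFS tree of `G`. -/
def IsDFSTree {V : Type*} (G T : SimpleGraph V) (r : V) : Prop :=
  T ≤ G ∧ T.IsTree ∧ ∀ u v : V, G.Adj u v → TreeComparable T r u v

/-- The vertex set (as a subset of `V`) of the connected component `K` of the subgraph of `G`
induced on the vertices outside the path `p`. -/
def compSet {V : Type*} (G : SimpleGraph V) {r s : V} (p : G.Walk r s)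
    (K : (G.induce {v : V | v ∉ p.support}).ConnectedComponent) : Set V :=
  {v : V | ∃ h : v ∉ p.support,
    (G.induce {v : V | v ∉ p.support}).connectedComponentMk ⟨v, h⟩ = K}

/-- Let `G` be a finite connected simple graph and `P : r = p_0 — … — p_t` a simple path in
`G`. Let the `C_i` be the connected components of the subgraph induced on the vertices
outside `P`. For each component pick an edge `{x_i, y_i}` with `y_i ∈ C_i` and
`x_i = p_{j_i}`, `j_i` maximal among indices `j` such that `p_j` has a neighbor in `C_i`, and
a DFS tree `(T_i, y_i)` of `G[C_i]`. Then the spanning subgraph consisting of the edges of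
`P`, the edges `{x_i, y_i}`, and the edges of the `T_i` is a spanning tree of `G` which,
rooted at `r`, is a DFS tree of `G`. -/
theorem stmt9 {V : Type*} [Fintype V] (G : SimpleGraph V) (hG : G.Connected)
    {r s : V} (p : G.Walk r s) (hp : p.IsPath)
    (y : (G.induce {v : V | v ∉ p.support}).ConnectedComponent → {v : V | v ∉ p.support})
    (hy : ∀ K, (G.induce {v : V | v ∉ p.support}).connectedComponentMk (y K) = K)
    (j : (G.induce {v : V | v ∉ p.support}).ConnectedComponent → ℕ)
    (hjle : ∀ K, j K ≤ p.length)
    (hadj : ∀ K, G.Adj (p.getVert (j K)) (y K : V))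
    (hmax : ∀ K, ∀ i ≤ p.length,
      (∃ z : {v : V | v ∉ p.support},
        (G.induce {v : V | v ∉ p.support}).connectedComponentMk z = K ∧
          G.Adj (p.getVert i) (z : V)) → i ≤ j K)
    (Ti : ∀ K : (G.induce {v : V | v ∉ p.support}).ConnectedComponent,
      SimpleGraph (compSet G p K))
    (hTi : ∀ K, IsDFSTree (G.induce (compSet G p K)) (Ti K)
      ⟨(y K : V), ⟨(y K).2, by rw [Subtype.coe_eta]; exact hy K⟩⟩) :
    IsDFSTree G
      (SimpleGraph.fromRel (fun a b =>
        s(a, b) ∈ p.edges ∨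
        (∃ K, a = p.getVert (j K) ∧ b = (y K : V)) ∨
        (∃ K, ∃ (ha : a ∈ compSet G p K) (hb : b ∈ compSet G p K),
          (Ti K).Adj ⟨a, ha⟩ ⟨b, hb⟩)))
      r := by
  classical
  set T : SimpleGraph V := SimpleGraph.fromRel (fun a b =>
        s(a, b) ∈ p.edges ∨
        (∃ K, a = p.getVert (j K) ∧ b = (y K : V)) ∨
        (∃ K, ∃ (ha : a ∈ compSet G p K) (hb : b ∈ compSet G p K),
          (Ti K).Adj ⟨a, ha⟩ ⟨b, hb⟩)) with hTdef
  -- basic facts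
  have hgsup : ∀ i, i ≤ p.length → p.getVert i ∈ p.support := fun i hi =>
    Walk.mem_support_iff_exists_getVert.mpr ⟨i, rfl, hi⟩
  have hxS : ∀ K, p.getVert (j K) ∈ p.support := fun K => hgsup _ (hjle K)
  have hyS : ∀ K, (y K : V) ∉ p.support := fun K => (y K).2
  have hyC : ∀ K, (y K : V) ∈ compSet G p K := fun K =>
    ⟨(y K).2, by rw [Subtype.coe_eta]; exact hy K⟩
  have hCnotS : ∀ K v, v ∈ compSet G p K → v ∉ p.support := by
    rintro K v ⟨h, -⟩; exact h
  have hCmk : ∀ v (h : v ∉ p.support),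
      v ∈ compSet G p ((G.induce {v : V | v ∉ p.support}).connectedComponentMk ⟨v, h⟩) :=
    fun v h => ⟨h, rfl⟩
  have hCuniq : ∀ K K' v, v ∈ compSet G p K → v ∈ compSet G p K' → K = K' := by
    rintro K K' v ⟨h1, e1⟩ ⟨h2, e2⟩
    rw [← e1, ← e2]
  -- getVert injectivity shortcut
  have hginj : ∀ a b : ℕ, a ≤ p.length → b ≤ p.length → p.getVert a = p.getVert b → a = b :=
    fun a b ha hb h => hp.getVert_inj ha hb h
  -- T ≤ G
  have relG : ∀ a b : V,
      (s(a, b) ∈ p.edges ∨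
        (∃ K, a = p.getVert (j K) ∧ b = (y K : V)) ∨
        (∃ K, ∃ (ha : a ∈ compSet G p K) (hb : b ∈ compSet G p K),
          (Ti K).Adj ⟨a, ha⟩ ⟨b, hb⟩)) → G.Adj a b := by
    rintro a b (h | ⟨K, rfl, rfl⟩ | ⟨K, ha, hb, h⟩)
    · exact (G.mem_edgeSet).mp (p.edges_subset_edgeSet h)
    · exact hadj K
    · have := (hTi K).1 h
      simpa using this
  have hTG : T ≤ G := by
    intro a b hab
    rw [hTdef, SimpleGraph.fromRel_adj] at hab
    rcases hab.2 with h | h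
    · exact relG a b h
    · exact (relG b a h).symm
  -- adjacency characterization
  have adjT : ∀ a b : V, T.Adj a b →
      (∃ k, k < p.length ∧ ((a = p.getVert k ∧ b = p.getVert (k+1)) ∨
          (b = p.getVert k ∧ a = p.getVert (k+1)))) ∨
      (∃ K, (a = p.getVert (j K) ∧ b = (y K : V)) ∨ (b = p.getVert (j K) ∧ a = (y K : V))) ∨
      (∃ K, ∃ (ha : a ∈ compSet G p K) (hb : b ∈ compSet G p K),
          (Ti K).Adj ⟨a, ha⟩ ⟨b, hb⟩) := by
    have main : ∀ a b : V,
        (s(a, b) ∈ p.edges ∨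
          (∃ K, a = p.getVert (j K) ∧ b = (y K : V)) ∨
          (∃ K, ∃ (ha : a ∈ compSet G p K) (hb : b ∈ compSet G p K),
            (Ti K).Adj ⟨a, ha⟩ ⟨b, hb⟩)) →
        (∃ k, k < p.length ∧ ((a = p.getVert k ∧ b = p.getVert (k+1)) ∨
            (b = p.getVert k ∧ a = p.getVert (k+1)))) ∨
        (∃ K, (a = p.getVert (j K) ∧ b = (y K : V)) ∨ (b = p.getVert (j K) ∧ a = (y K : V))) ∨
        (∃ K, ∃ (ha : a ∈ compSet G p K) (hb : b ∈ compSet G p K),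
            (Ti K).Adj ⟨a, ha⟩ ⟨b, hb⟩) := by
      rintro a b (h | ⟨K, h1, h2⟩ | ⟨K, ha, hb, h⟩)
      · obtain ⟨k, hk, he⟩ := Walk.exists_getVert_of_mem_edges h
        rw [Sym2.eq_iff] at he
        rcases he with ⟨h1, h2⟩ | ⟨h1, h2⟩
        · exact Or.inl ⟨k, hk, Or.inl ⟨h1, h2⟩⟩
        · exact Or.inl ⟨k, hk, Or.inr ⟨h2, h1⟩⟩
      · exact Or.inr (Or.inl ⟨K, Or.inl ⟨h1, h2⟩⟩)
      · exact Or.inr (Or.inr ⟨K, ha, hb, h⟩)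
    intro a b hab
    rw [hTdef, SimpleGraph.fromRel_adj] at hab
    rcases hab.2 with h | h
    · exact main a b h
    · rcases main b a h with ⟨k, hk, h'⟩ | ⟨K, h'⟩ | ⟨K, ha, hb, h'⟩
      · exact Or.inl ⟨k, hk, h'.symm⟩
      · exact Or.inr (Or.inl ⟨K, h'.symm⟩)
      · exact Or.inr (Or.inr ⟨K, hb, ha, h'.symm⟩)
  -- building T-adjacencies
  have mkAdj : ∀ a b : V, a ≠ b →
      (s(a, b) ∈ p.edges ∨
        (∃ K, a = p.getVert (j K) ∧ b = (y K : V)) ∨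
        (∃ K, ∃ (ha : a ∈ compSet G p K) (hb : b ∈ compSet G p K),
          (Ti K).Adj ⟨a, ha⟩ ⟨b, hb⟩)) → T.Adj a b := by
    intro a b hne h
    rw [hTdef, SimpleGraph.fromRel_adj]
    exact ⟨hne, Or.inl h⟩
  have pT : ∀ e ∈ p.edges, e ∈ T.edgeSet := by
    intro e he
    induction e with
    | h a b =>
      have hne : a ≠ b := (G.mem_edgeSet.mp (p.edges_subset_edgeSet he)).ne
      exact (T.mem_edgeSet).mpr (mkAdj a b hne (Or.inl he))
  have hxyT : ∀ K, T.Adj (p.getVert (j K)) ((y K : V)) := by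
    intro K
    refine mkAdj _ _ (fun he => hyS K (he ▸ hxS K)) (Or.inr (Or.inl ⟨K, rfl, rfl⟩))
  have homAdj : ∀ K (a b : compSet G p K), (Ti K).Adj a b → T.Adj a.1 b.1 := by
    intro K a b h
    refine mkAdj _ _ (fun he => h.ne (Subtype.ext he)) (Or.inr (Or.inr ⟨K, a.2, b.2, ?_⟩))
    exact h
  -- canonical path along p
  have hA : ∀ i : ℕ, ∃ w : T.Walk r (p.getVert i), w.IsPath ∧ w.length = min i p.length ∧
      ∀ x ∈ w.support, x ∈ p.support := by
    intro i
    refine ⟨(p.pref i).transfer T (fun e he => pT e (p.edges_pref_subset i he)), ?_, ?_, ?_⟩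
    · exact (hp.pref i).transfer _
    · rw [Walk.length_transfer, Walk.length_pref]
    · intro x hx
      rw [Walk.support_transfer] at hx
      exact p.support_pref_subset i hx
  -- canonical segment of p
  have hB : ∀ a b : ℕ, a ≤ b → b ≤ p.length →
      ∃ w : T.Walk (p.getVert a) (p.getVert b), w.IsPath ∧ w.length = b - a ∧
        ∀ x ∈ w.support, x ∈ p.support := by
    intro a b hab hbl
    refine ⟨(((p.pref b).drop a).copy (p.getVert_pref b a hab) rfl).transfer T ?_, ?_, ?_, ?_⟩
    · intro e he
      rw [Walk.edges_copy] at he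
      exact pT e (p.edges_pref_subset b (Walk.edges_drop_subset _ a he))
    · refine Walk.IsPath.transfer _ ?_
      rw [Walk.isPath_copy]
      exact Walk.IsPath.drop (hp.pref b) a
    · rw [Walk.length_transfer, Walk.length_copy, Walk.length_drop, Walk.length_pref]
      omega
    · intro x hx
      rw [Walk.support_transfer, Walk.support_copy] at hx
      exact p.support_pref_subset b (Walk.support_drop_subset _ a hx)
  -- canonical path inside a component
  have hC : ∀ K (u v : V) (hu : u ∈ compSet G p K) (hv : v ∈ compSet G p K),
      ∃ w : T.Walk u v, w.IsPath ∧ w.length = (Ti K).dist ⟨u, hu⟩ ⟨v, hv⟩ ∧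
        ∀ x ∈ w.support, x ∈ compSet G p K := by
    intro K u v hu hv
    have hTiK : (Ti K).IsTree := (hTi K).2.1
    obtain ⟨w', hw', hl'⟩ :=
      exists_path_length_dist (((isTree_iff _).mp hTiK).1 ⟨u, hu⟩ ⟨v, hv⟩)
    refine ⟨w'.map ⟨Subtype.val, fun {x z} h => homAdj K x z h⟩, ?_, ?_, ?_⟩
    · exact (Walk.map_isPath_iff_of_injective Subtype.val_injective).mpr hw'
    · rw [Walk.length_map]; exact hl'
    · intro x hx
      rw [Walk.support_map] at hx
      obtain ⟨z, hz, rfl⟩ := List.mem_map.mp hx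
      exact z.2
  -- reachability, connectivity
  have hreach : ∀ v : V, T.Reachable r v := by
    intro v
    by_cases hv : v ∈ p.support
    · obtain ⟨i, hgi, hil⟩ := Walk.mem_support_iff_exists_getVert.mp hv
      obtain ⟨w, -, -, -⟩ := hA i
      exact hgi ▸ w.reachable
    · obtain ⟨w1, -, -, -⟩ := hA (j ((G.induce {v : V | v ∉ p.support}).connectedComponentMk ⟨v, hv⟩))
      set K := (G.induce {v : V | v ∉ p.support}).connectedComponentMk ⟨v, hv⟩ with hK
      obtain ⟨w2, -, -, -⟩ := hC K ((y K : V)) v (hyC K) (hCmk v hv)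
      exact w1.reachable.trans ((hxyT K).reachable.trans w2.reachable)
  have hconn : T.Connected := by
    have : Nonempty V := ⟨r⟩
    exact ⟨fun a b => (hreach a).symm.trans (hreach b)⟩
  -- the rank function
  set t : V → ℕ := fun v =>
    if hv : v ∈ p.support then
      Classical.choose (Walk.mem_support_iff_exists_getVert.mp hv)
    else
      p.length + 1 + (Ti ((G.induce {v : V | v ∉ p.support}).connectedComponentMk ⟨v, hv⟩)).dist
        ⟨(y ((G.induce {v : V | v ∉ p.support}).connectedComponentMk ⟨v, hv⟩) : V),
          hyC _⟩ ⟨v, hCmk v hv⟩ with htdef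
  have ht_idx : ∀ i, i ≤ p.length → t (p.getVert i) = i := by
    intro i hi
    have hv : p.getVert i ∈ p.support := hgsup i hi
    simp only [htdef]
    rw [dif_pos hv]
    obtain ⟨h1, h2⟩ := Classical.choose_spec (Walk.mem_support_iff_exists_getVert.mp hv)
    exact hginj _ _ h2 hi h1
  have ht_out : ∀ v (hv : v ∉ p.support) K (h : v ∈ compSet G p K),
      t v = p.length + 1 + (Ti K).dist ⟨(y K : V), hyC K⟩ ⟨v, h⟩ := by
    intro v hv K h
    have e : (G.induce {v : V | v ∉ p.support}).connectedComponentMk ⟨v, hv⟩ = K :=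
      hCuniq _ _ v (hCmk v hv) h
    subst e
    simp only [htdef]
    rw [dif_neg hv]
  have ht_out_ge : ∀ v, v ∉ p.support → p.length + 1 ≤ t v := by
    intro v hv
    rw [ht_out v hv _ (hCmk v hv)]
    omega
  -- rank is injective on adjacent vertices
  have hP1 : ∀ a b : V, T.Adj a b → t a ≠ t b := by
    intro a b hab
    rcases adjT a b hab with ⟨k, hk, hor⟩ | ⟨K, hor⟩ | ⟨K, ha, hb, hadj'⟩
    · rcases hor with ⟨rfl, rfl⟩ | ⟨rfl, rfl⟩ <;>
        rw [ht_idx _ (by omega), ht_idx _ (by omega)] <;> omega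
    · have h1 : t (p.getVert (j K)) = j K := ht_idx _ (hjle K)
      have h2 : p.length + 1 ≤ t ((y K : V)) := ht_out_ge _ (hyS K)
      have h3 := hjle K
      rcases hor with ⟨rfl, rfl⟩ | ⟨rfl, rfl⟩ <;> omega
    · have hva : a ∉ p.support := hCnotS K a ha
      have hvb : b ∉ p.support := hCnotS K b hb
      rw [ht_out a hva K ha, ht_out b hvb K hb]
      have hd := tree_dist_adj (hTi K).2.1 ⟨(y K : V), hyC K⟩ hadj'
      omega
  -- each vertex has at most one lower-rank neighbor
  have hP2 : ∀ v a b : V, T.Adj v a → T.Adj v b → t a < t v → t b < t v → a = b := by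
    intro v a b h1 h2 l1 l2
    by_cases hv : v ∈ p.support
    · obtain ⟨i, hgi, hil⟩ := Walk.mem_support_iff_exists_getVert.mp hv
      subst hgi
      have htv : t (p.getVert i) = i := ht_idx i hil
      have step : ∀ c : V, T.Adj (p.getVert i) c → t c < i → c = p.getVert (i - 1) ∧ 1 ≤ i := by
        intro c hc hl
        rcases adjT _ c hc with ⟨k, hk, hor⟩ | ⟨K, hor⟩ | ⟨K, hK1, hK2, -⟩
        · rcases hor with ⟨he, rfl⟩ | ⟨rfl, he⟩
          · have : i = k := hginj i k hil (by omega) he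
            subst this
            rw [ht_idx (i + 1) (by omega)] at hl
            omega
          · have : i = k + 1 := hginj i (k + 1) hil (by omega) he
            constructor
            · rw [this]; simp
            · omega
        · rcases hor with ⟨he, rfl⟩ | ⟨rfl, he⟩
          · have := ht_out_ge _ (hyS K)
            omega
          · exact absurd (he ▸ hgsup i hil) (hyS K)
        · exact absurd (hgsup i hil) (hCnotS K _ hK1)
      obtain ⟨e1, -⟩ := step a h1 (by omega)
      obtain ⟨e2, -⟩ := step b h2 (by omega)
      rw [e1, e2]
    · have hvC := hCmk v hv
      set K := (G.induce {v : V | v ∉ p.support}).connectedComponentMk ⟨v, hv⟩ with hKdef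
      have htv : t v = p.length + 1 + (Ti K).dist ⟨(y K : V), hyC K⟩ ⟨v, hvC⟩ :=
        ht_out v hv K hvC
      by_cases hvy : v = (y K : V)
      · -- v is the root of its component
        have htv0 : t v = p.length + 1 := by
          rw [htv]
          have : (⟨v, hvC⟩ : compSet G p K) = ⟨(y K : V), hyC K⟩ := Subtype.ext hvy
          rw [this, SimpleGraph.dist_self]
        have step : ∀ c : V, T.Adj v c → t c < t v → c = p.getVert (j K) := by
          intro c hc hl
          rcases adjT _ c hc with ⟨k, hk, hor⟩ | ⟨K', hor⟩ | ⟨K', hK1, hK2, hadj'⟩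
          · rcases hor with ⟨he, -⟩ | ⟨-, he⟩ <;>
              exact absurd (he ▸ hgsup _ (by omega)) hv
          · rcases hor with ⟨he, -⟩ | ⟨hc1, he⟩
            · exact absurd (he ▸ hgsup _ (hjle K')) hv
            · have hvK' : v ∈ compSet G p K' := he ▸ hyC K'
              have : K = K' := hCuniq _ _ v hvC hvK'
              rw [hc1, ← this]
          · exfalso
            have hKK' : K = K' := hCuniq _ _ v hvC hK1
            subst hKK'
            have htc : t c = p.length + 1 + (Ti K).dist ⟨(y K : V), hyC K⟩ ⟨c, hK2⟩ :=
              ht_out c (hCnotS K c hK2) K hK2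
            omega
        rw [step a h1 l1, step b h2 l2]
      · -- v is a non-root vertex of its component
        have step : ∀ c : V, T.Adj v c → t c < t v → ∃ hc : c ∈ compSet G p K,
            (Ti K).Adj ⟨v, hvC⟩ ⟨c, hc⟩ ∧
            (Ti K).dist ⟨(y K : V), hyC K⟩ ⟨c, hc⟩ <
              (Ti K).dist ⟨(y K : V), hyC K⟩ ⟨v, hvC⟩ := by
          intro c hc hl
          rcases adjT _ c hc with ⟨k, hk, hor⟩ | ⟨K', hor⟩ | ⟨K', hK1, hK2, hadj'⟩
          · rcases hor with ⟨he, -⟩ | ⟨-, he⟩ <;>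
              exact absurd (he ▸ hgsup _ (by omega)) hv
          · rcases hor with ⟨he, -⟩ | ⟨hc1, he⟩
            · exact absurd (he ▸ hgsup _ (hjle K')) hv
            · exfalso
              have hvK' : v ∈ compSet G p K' := he ▸ hyC K'
              have hKK' : K = K' := hCuniq _ _ v hvC hvK'
              subst hKK'
              exact hvy he
          · have hKK' : K = K' := hCuniq _ _ v hvC hK1
            subst hKK'
            have htc : t c = p.length + 1 + (Ti K).dist ⟨(y K : V), hyC K⟩ ⟨c, hK2⟩ :=
              ht_out c (hCnotS K c hK2) K hK2
            exact ⟨hK2, hadj', by omega⟩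
        obtain ⟨ha, hadja, hda⟩ := step a h1 l1
        obtain ⟨hb, hadjb, hdb⟩ := step b h2 l2
        have := tree_parent_unique (hTi K).2.1 ⟨(y K : V), hyC K⟩ hadja hadjb hda hdb
        exact congrArg Subtype.val this
  have hacyc : T.IsAcyclic := acyclic_of_rank t hP1 hP2
  have hTree : T.IsTree := (isTree_iff T).mpr ⟨hconn, hacyc⟩
  -- distance computations
  have hdA : ∀ i, i ≤ p.length → T.dist r (p.getVert i) = i := by
    intro i hi
    obtain ⟨w, hw, hl, -⟩ := hA i
    rw [← tree_length_eq_dist hTree hw, hl]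
    omega
  have hdB : ∀ a b : ℕ, a ≤ b → b ≤ p.length →
      T.dist (p.getVert a) (p.getVert b) = b - a := by
    intro a b hab hbl
    obtain ⟨w, hw, hl, -⟩ := hB a b hab hbl
    rw [← tree_length_eq_dist hTree hw, hl]
  have hdC : ∀ K (u v : V) (hu : u ∈ compSet G p K) (hv : v ∈ compSet G p K),
      T.dist u v = (Ti K).dist ⟨u, hu⟩ ⟨v, hv⟩ := by
    intro K u v hu hv
    obtain ⟨w, hw, hl, -⟩ := hC K u v hu hv
    rw [← tree_length_eq_dist hTree hw, hl]
  have hdMix : ∀ K (v : V) (hv : v ∈ compSet G p K) (i : ℕ), i ≤ j K →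
      T.dist (p.getVert i) v =
        (j K - i) + 1 + (Ti K).dist ⟨(y K : V), hyC K⟩ ⟨v, hv⟩ := by
    intro K v hv i hij
    obtain ⟨w1, hw1, hl1, hs1⟩ := hB i (j K) hij (hjle K)
    obtain ⟨w2, hw2, hl2, hs2⟩ := hC K ((y K : V)) v (hyC K) hv
    have hcons : (Walk.cons (hxyT K) w2).IsPath := by
      rw [Walk.cons_isPath_iff]
      exact ⟨hw2, fun hmem => hCnotS K _ (hs2 _ hmem) (hxS K)⟩
    have hW : (w1.append (Walk.cons (hxyT K) w2)).IsPath := by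
      refine Walk.isPath_append' hw1 hcons ?_
      intro x hx hx'
      rw [Walk.support_cons] at hx'
      rcases List.mem_cons.mp hx' with rfl | hx'
      · rfl
      · exact absurd (hs1 x hx) (hCnotS K x (hs2 x hx'))
    have := tree_length_eq_dist hTree hW
    rw [Walk.length_append, Walk.length_cons, hl1, hl2] at this
    omega
  have hdR : ∀ K (v : V) (hv : v ∈ compSet G p K),
      T.dist r v = j K + 1 + (Ti K).dist ⟨(y K : V), hyC K⟩ ⟨v, hv⟩ := by
    intro K v hv
    obtain ⟨w1, hw1, hl1, hs1⟩ := hA (j K)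
    obtain ⟨w2, hw2, hl2, hs2⟩ := hC K ((y K : V)) v (hyC K) hv
    have hcons : (Walk.cons (hxyT K) w2).IsPath := by
      rw [Walk.cons_isPath_iff]
      exact ⟨hw2, fun hmem => hCnotS K _ (hs2 _ hmem) (hxS K)⟩
    have hW : (w1.append (Walk.cons (hxyT K) w2)).IsPath := by
      refine Walk.isPath_append' hw1 hcons ?_
      intro x hx hx'
      rw [Walk.support_cons] at hx'
      rcases List.mem_cons.mp hx' with rfl | hx'
      · rfl
      · exact absurd (hs1 x hx) (hCnotS K x (hs2 x hx'))
    have := tree_length_eq_dist hTree hW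
    rw [Walk.length_append, Walk.length_cons, hl1, hl2] at this
    have hj := hjle K
    omega
  -- the DFS property
  refine ⟨hTG, hTree, ?_⟩
  have case2 : ∀ u v : V, G.Adj u v → u ∈ p.support → v ∉ p.support →
      IsAncestor T r u v := by
    intro u v huv hu hv
    obtain ⟨i, hgi, hil⟩ := Walk.mem_support_iff_exists_getVert.mp hu
    subst hgi
    have hvC := hCmk v hv
    set K := (G.induce {v : V | v ∉ p.support}).connectedComponentMk ⟨v, hv⟩ with hKdef
    have hij : i ≤ j K := hmax K i hil ⟨⟨v, hv⟩, rfl, huv⟩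
    show T.dist r (p.getVert i) + T.dist (p.getVert i) v = T.dist r v
    rw [hdA i hil, hdMix K v hvC i hij, hdR K v hvC]
    omega
  intro u v huv
  by_cases hu : u ∈ p.support <;> by_cases hv : v ∈ p.support
  · obtain ⟨a, hga, hal⟩ := Walk.mem_support_iff_exists_getVert.mp hu
    obtain ⟨b, hgb, hbl⟩ := Walk.mem_support_iff_exists_getVert.mp hv
    subst hga; subst hgb
    rcases le_total a b with hab | hab
    · refine Or.inl ?_
      show T.dist r (p.getVert a) + T.dist (p.getVert a) (p.getVert b) = T.dist r (p.getVert b)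
      rw [hdA a hal, hdA b hbl, hdB a b hab hbl]
      omega
    · refine Or.inr ?_
      show T.dist r (p.getVert b) + T.dist (p.getVert b) (p.getVert a) = T.dist r (p.getVert a)
      rw [hdA a hal, hdA b hbl, hdB b a hab hal]
      omega
  · exact Or.inl (case2 u v huv hu hv)
  · exact Or.inr (case2 v u huv.symm hv hu)
  · have hKeq : (G.induce {v : V | v ∉ p.support}).connectedComponentMk ⟨u, hu⟩ =
        (G.induce {v : V | v ∉ p.support}).connectedComponentMk ⟨v, hv⟩ :=
      SimpleGraph.ConnectedComponent.sound
        (SimpleGraph.Adj.reachable (by simpa using huv))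
    set K := (G.induce {v : V | v ∉ p.support}).connectedComponentMk ⟨v, hv⟩ with hKdef
    have huC : u ∈ compSet G p K := ⟨hu, hKeq⟩
    have hvC : v ∈ compSet G p K := hCmk v hv
    have hcomp := (hTi K).2.2 ⟨u, huC⟩ ⟨v, hvC⟩ (by simpa using huv)
    rcases hcomp with h | h
    · refine Or.inl ?_
      show T.dist r u + T.dist u v = T.dist r v
      rw [hdR K u huC, hdR K v hvC, hdC K u v huC hvC]
      have h' : (Ti K).dist ⟨(y K : V), hyC K⟩ ⟨u, huC⟩ + (Ti K).dist ⟨u, huC⟩ ⟨v, hvC⟩ =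
          (Ti K).dist ⟨(y K : V), hyC K⟩ ⟨v, hvC⟩ := h
      omega
    · refine Or.inr ?_
      show T.dist r v + T.dist v u = T.dist r u
      rw [hdR K u huC, hdR K v hvC, hdC K v u hvC huC]
      have h' : (Ti K).dist ⟨(y K : V), hyC K⟩ ⟨v, hvC⟩ + (Ti K).dist ⟨v, hvC⟩ ⟨u, huC⟩ =
          (Ti K).dist ⟨(y K : V), hyC K⟩ ⟨u, huC⟩ := h
      omega
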